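/- arXiv:1602.01035 — 4 statements merged into one kernel-verified Lean document; each statement's English description precedes it below -/
import Mathlib

section
/- Let F be a free group and let μ be the Magnus expansion. For every k ≥ 1, if w ∈ F^k (the k-th lower central series term), then μ(w) = 1 + (terms of degree ≥ k). Consequently, if μ(w) has a nonzero term of degree d with d < k, then w ∉ F^k. -/
set_option linter.unusedSectionVars false

noncomputable section

/-- Noncommutative formal power series over `ℤ` in variables indexed by `σ`:
coefficient functions on words (the value at a word `w` is the coefficient of the
monomial `X_{w 0} * X_{w 1} * ⋯`), with the convolution product. This is the ring
`ℤ⟨⟨X_i : i ∈ σ⟩⟩`. -/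
def NCSeries (σ : Type) : Type := List σ → ℤ

namespace NCSeries

variable {σ : Type} [DecidableEq σ]

instance : AddCommGroup (NCSeries σ) := Pi.addCommGroup

instance : One (NCSeries σ) := ⟨fun w => if w = [] then 1 else 0⟩

instance : Mul (NCSeries σ) :=
  ⟨fun f g w => ∑ i ∈ Finset.range (w.length + 1), f (w.take i) * g (w.drop i)⟩

theorem mul_def (f g : NCSeries σ) (w : List σ) :
    (f * g) w = ∑ i ∈ Finset.range (w.length + 1), f (w.take i) * g (w.drop i) := rfl

theorem one_def (w : List σ) : (1 : NCSeries σ) w = if w = [] then 1 else 0 := rfl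

theorem add_def (f g : NCSeries σ) (w : List σ) : (f + g) w = f w + g w := rfl

instance instRing : Ring (NCSeries σ) :=
  { (inferInstance : AddCommGroup (NCSeries σ)),
    (inferInstance : One (NCSeries σ)),
    (inferInstance : Mul (NCSeries σ)) with
    left_distrib := by
      intro f g h; funext w
      show (f * (g + h)) w = (f * g) w + (f * h) w
      simp only [mul_def]
      rw [← Finset.sum_add_distrib]
      exact Finset.sum_congr rfl fun i _ => mul_add _ _ _
    right_distrib := by
      intro f g h; funext w
      show ((f + g) * h) w = (f * h) w + (g * h) w
      simp only [mul_def]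
      rw [← Finset.sum_add_distrib]
      exact Finset.sum_congr rfl fun i _ => add_mul _ _ _
    zero_mul := by
      intro f; funext w
      show ((0 : NCSeries σ) * f) w = 0
      simp only [mul_def]
      exact Finset.sum_eq_zero fun i _ => zero_mul _
    mul_zero := by
      intro f; funext w
      show (f * (0 : NCSeries σ)) w = 0
      simp only [mul_def]
      exact Finset.sum_eq_zero fun i _ => mul_zero _
    one_mul := by
      intro f; funext w
      rw [mul_def, Finset.sum_eq_single 0]
      · simp [one_def]
      · intro i hi hne
        have hw : w ≠ [] := by
          intro h; subst h; simp [Finset.mem_range] at hi; omega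
        have ht : w.take i ≠ [] := by
          simp [List.take_eq_nil_iff, hne, hw]
        simp [one_def, ht]
      · intro h; simp at h
    mul_one := by
      intro f; funext w
      rw [mul_def, Finset.sum_eq_single w.length]
      · simp [one_def]
      · intro i hi hne
        have hd : w.drop i ≠ [] := by
          simp [List.drop_eq_nil_iff]
          simp [Finset.mem_range] at hi
          omega
        simp [one_def, hd]
      · intro h; simp at h
    mul_assoc := by
      intro f g h; funext w
      show (f * g * h) w = (f * (g * h)) w
      rw [mul_def, mul_def]
      have L : ∀ j ∈ Finset.range (w.length + 1),
          (f * g) (w.take j) * h (w.drop j) =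
            ∑ i ∈ Finset.range (j + 1),
              f (w.take i) * (g (List.take (j - i) (w.drop i)) * h (w.drop j)) := by
        intro j hj
        simp only [Finset.mem_range] at hj
        rw [mul_def, Finset.sum_mul]
        have hlen : (w.take j).length = j := by
          rw [List.length_take]; omega
        rw [hlen]
        refine Finset.sum_congr rfl fun i hi => ?_
        simp only [Finset.mem_range] at hi
        rw [List.take_take, List.drop_take, min_eq_left (by omega : i ≤ j), mul_assoc]
      have R : ∀ i ∈ Finset.range (w.length + 1),
          f (w.take i) * (g * h) (w.drop i) =
            ∑ j ∈ Finset.Icc i w.length,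
              f (w.take i) * (g (List.take (j - i) (w.drop i)) * h (w.drop j)) := by
        intro i hi
        simp only [Finset.mem_range] at hi
        rw [mul_def, Finset.mul_sum, List.length_drop]
        refine Finset.sum_nbij' (i := fun t => i + t) (j := fun j => j - i) ?_ ?_ ?_ ?_ ?_
        · intro t ht; simp only [Finset.mem_range] at ht; simp only [Finset.mem_Icc]; omega
        · intro j hj; simp only [Finset.mem_Icc] at hj; simp only [Finset.mem_range]; omega
        · intro t ht; beta_reduce; omega
        · intro j hj; simp only [Finset.mem_Icc] at hj; beta_reduce; omega
        · intro t ht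
          have e : i + t - i = t := by omega
          rw [e, List.drop_drop]
      rw [Finset.sum_congr rfl L, Finset.sum_congr rfl R]
      rw [Finset.sum_sigma', Finset.sum_sigma']
      refine Finset.sum_nbij' (i := fun p => ⟨p.2, p.1⟩) (j := fun p => ⟨p.2, p.1⟩)
        ?_ ?_ ?_ ?_ ?_
      · rintro ⟨j, i⟩ hp
        simp only [Finset.mem_sigma, Finset.mem_range, Finset.mem_Icc] at hp ⊢
        omega
      · rintro ⟨i, j⟩ hp
        simp only [Finset.mem_sigma, Finset.mem_range, Finset.mem_Icc] at hp ⊢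
        omega
      · rintro ⟨j, i⟩ _; rfl
      · rintro ⟨i, j⟩ _; rfl
      · rintro ⟨j, i⟩ _; rfl }

/-- The variable `X i`. -/
def X (i : σ) : NCSeries σ := fun w => if w = [i] then 1 else 0

/-- The geometric series `1 - X i + X i ^ 2 - ⋯`, inverse of `1 + X i`. -/
def geom (i : σ) : NCSeries σ :=
  fun w => if w = List.replicate w.length i then (-1 : ℤ) ^ w.length else 0

theorem oneAddX_mul_geom (i : σ) : ((1 + X i) * geom i : NCSeries σ) = 1 := by
  funext w
  cases w with
  | nil => simp [mul_def, one_def, X, geom, add_def]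
  | cons a t =>
    rw [mul_def]
    have hlen : (a :: t).length + 1 = t.length + 1 + 1 := rfl
    rw [hlen, Finset.sum_range_succ', Finset.sum_range_succ']
    have hz : ∀ j ∈ Finset.range t.length,
        ((1 + X i) : NCSeries σ) ((a :: t).take (j + 1 + 1)) * geom i ((a :: t).drop (j + 1 + 1))
          = 0 := by
      intro j hj
      simp only [Finset.mem_range] at hj
      have hl : ((a :: t).take (j + 1 + 1)).length = j + 2 := by
        rw [List.length_take]; simp; omega
      have h1 : (a :: t).take (j + 1 + 1) ≠ [] := by
        intro h; rw [h] at hl; simp at hl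
      have h2 : (a :: t).take (j + 1 + 1) ≠ [i] := by
        intro h; rw [h] at hl; simp at hl
      rw [add_def, one_def, if_neg h1]
      show (0 + if _ = [i] then _ else _) * _ = 0
      rw [if_neg h2]
      simp
    rw [Finset.sum_congr rfl hz]
    simp only [Finset.sum_const_zero, zero_add]
    show ((1 + X i) : NCSeries σ) [a] * geom i t + ((1 + X i) : NCSeries σ) [] * geom i (a :: t)
        = (1 : NCSeries σ) (a :: t)
    rw [add_def, add_def, one_def, one_def, if_neg (by simp), if_pos rfl]
    show (0 + X i [a]) * geom i t + (1 + X i []) * geom i (a :: t) = (1 : NCSeries σ) (a :: t)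
    rw [one_def, if_neg (by simp)]
    by_cases hai : a = i
    · subst hai
      rw [show X a [a] = 1 from if_pos rfl, show X a [] = 0 from if_neg (by simp)]
      have hg : geom a (a :: t) = -(geom a t) := by
        simp only [geom, List.length_cons, List.replicate_succ, List.cons.injEq, true_and]
        by_cases ht : t = List.replicate t.length a
        · rw [if_pos ht, if_pos ht]; ring
        · rw [if_neg ht, if_neg ht]; ring
      rw [hg]; ring
    · rw [show X i [a] = 0 from if_neg (by simp [hai]), show X i [] = 0 from if_neg (by simp)]
      have hg : geom i (a :: t) = 0 := by
        simp only [geom, List.length_cons, List.replicate_succ]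
        rw [if_neg (by simp [hai])]
      rw [hg]; ring

theorem geom_mul_oneAddX (i : σ) : (geom i * (1 + X i) : NCSeries σ) = 1 := by
  funext w
  induction w using List.reverseRecOn with
  | nil => simp [mul_def, one_def, X, geom, add_def]
  | append_singleton t a _ =>
    rw [mul_def]
    have hlen : (t ++ [a]).length + 1 = t.length + 1 + 1 := by simp
    rw [hlen, Finset.sum_range_succ, Finset.sum_range_succ]
    have hz : ∀ j ∈ Finset.range t.length,
        geom i ((t ++ [a]).take j) * ((1 + X i) : NCSeries σ) ((t ++ [a]).drop j) = 0 := by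
      intro j hj
      simp only [Finset.mem_range] at hj
      have hl : ((t ++ [a]).drop j).length = t.length + 1 - j := by
        rw [List.length_drop]; simp
      have h1 : (t ++ [a]).drop j ≠ [] := by
        intro h; rw [h] at hl; simp at hl; omega
      have h2 : (t ++ [a]).drop j ≠ [i] := by
        intro h; rw [h] at hl; simp at hl; omega
      rw [add_def, one_def, if_neg h1]
      show _ * (0 + if _ = [i] then _ else _) = 0
      rw [if_neg h2]
      simp
    rw [Finset.sum_congr rfl hz]
    simp only [Finset.sum_const_zero, zero_add]
    have htake : (t ++ [a]).take t.length = t := by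
      rw [List.take_left']; simp
    have hdrop : (t ++ [a]).drop t.length = [a] := by
      rw [List.drop_left']; simp
    have htake' : (t ++ [a]).take (t.length + 1) = t ++ [a] := by
      apply List.take_of_length_le; simp
    have hdrop' : (t ++ [a]).drop (t.length + 1) = [] := by
      apply List.drop_of_length_le; simp
    rw [htake, hdrop, htake', hdrop']
    rw [add_def, add_def, one_def, one_def, if_neg (by simp), if_pos rfl]
    show geom i t * (0 + X i [a]) + geom i (t ++ [a]) * (1 + X i []) = (1 : NCSeries σ) (t ++ [a])
    rw [one_def, if_neg (by simp)]
    by_cases hai : a = i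
    · subst hai
      rw [show X a [a] = 1 from if_pos rfl, show X a [] = 0 from if_neg (by simp)]
      have hg : geom a (t ++ [a]) = -(geom a t) := by
        simp only [geom, List.length_append, List.length_singleton]
        have : List.replicate (t.length + 1) a = List.replicate t.length a ++ [a] := by
          rw [List.replicate_succ']
        rw [this]
        by_cases ht : t = List.replicate t.length a
        · rw [if_pos (by rw [← ht]), if_pos ht]; ring
        · rw [if_neg (by simpa using ht), if_neg ht]; ring
      rw [hg]; ring
    · rw [show X i [a] = 0 from if_neg (by simp [hai]), show X i [] = 0 from if_neg (by simp)]
      have hg : geom i (t ++ [a]) = 0 := by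
        simp only [geom, List.length_append, List.length_singleton]
        rw [if_neg]
        intro h
        rw [List.replicate_succ'] at h
        have := (List.append_inj' h (by simp)).2
        simp at this
        exact hai this
      rw [hg]; ring

/-- `1 + X i` as a unit of the power series ring, with inverse the geometric series
`1 - X i + X i ^ 2 - ⋯`. -/
def oneAddX (i : σ) : (NCSeries σ)ˣ where
  val := 1 + X i
  inv := geom i
  val_inv := oneAddX_mul_geom i
  inv_val := geom_mul_oneAddX i

end NCSeries

/-- The Magnus expansion: the group homomorphism from the free group on `N` generators
to the group of units of `ℤ⟨⟨X₁, …, X_N⟩⟩` sending the generator `xᵢ` to `1 + Xᵢ`. -/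
def magnus (N : ℕ) : FreeGroup (Fin N) →* (NCSeries (Fin N))ˣ :=
  FreeGroup.lift fun i => NCSeries.oneAddX i

open scoped commutatorElement

namespace NCSeries

variable {σ : Type} [DecidableEq σ]

theorem sub_def (f g : NCSeries σ) (u : List σ) : (f - g) u = f u - g u := rfl

/-- `f` has no terms of degree `< k`. -/
def LowDeg (k : ℕ) (f : NCSeries σ) : Prop := ∀ u : List σ, u.length < k → f u = 0

theorem LowDeg.add {k : ℕ} {f g : NCSeries σ} (hf : LowDeg k f) (hg : LowDeg k g) :
    LowDeg k (f + g) := fun u hu => by rw [add_def, hf u hu, hg u hu, add_zero]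

theorem LowDeg.sub {k : ℕ} {f g : NCSeries σ} (hf : LowDeg k f) (hg : LowDeg k g) :
    LowDeg k (f - g) := fun u hu => by rw [sub_def, hf u hu, hg u hu, sub_zero]

theorem LowDeg.rmul {k : ℕ} {f : NCSeries σ} (hf : LowDeg k f) (g : NCSeries σ) :
    LowDeg k (f * g) := by
  intro u hu
  rw [mul_def]
  refine Finset.sum_eq_zero fun i _ => ?_
  rw [hf _ (by rw [List.length_take]; omega), zero_mul]

theorem LowDeg.lmul {k : ℕ} {g : NCSeries σ} (hg : LowDeg k g) (f : NCSeries σ) :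
    LowDeg k (f * g) := by
  intro u hu
  rw [mul_def]
  refine Finset.sum_eq_zero fun i _ => ?_
  rw [hg _ (by rw [List.length_drop]; omega), mul_zero]

theorem LowDeg.mul {j k : ℕ} {f g : NCSeries σ} (hf : LowDeg j f) (hg : LowDeg k g) :
    LowDeg (j + k) (f * g) := by
  intro u hu
  rw [mul_def]
  refine Finset.sum_eq_zero fun i _ => ?_
  by_cases h : (u.take i).length < j
  · rw [hf _ h, zero_mul]
  · have : (u.drop i).length < k := by
      rw [List.length_take] at h; rw [List.length_drop]; omega
    rw [hg _ this, mul_zero]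

/-- The subgroup of units congruent to `1` modulo degree `k`. -/
def G (k : ℕ) : Subgroup (NCSeries σ)ˣ where
  carrier := {u | LowDeg k ((u : NCSeries σ) - 1)}
  one_mem' := by
    intro u _
    rw [Units.val_one, sub_self]
    rfl
  mul_mem' := by
    intro a b ha hb
    show LowDeg _ _
    have key : ((a * b : (NCSeries σ)ˣ) : NCSeries σ) - 1 =
        ((a : NCSeries σ) - 1) * ((b : NCSeries σ) - 1) +
          ((a : NCSeries σ) - 1) + ((b : NCSeries σ) - 1) := by
      rw [Units.val_mul]; noncomm_ring
    rw [key]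
    exact ((ha.rmul _).add ha).add hb
  inv_mem' := by
    intro a ha
    show LowDeg _ _
    have key : ((a⁻¹ : (NCSeries σ)ˣ) : NCSeries σ) - 1 =
        -(((a⁻¹ : (NCSeries σ)ˣ) : NCSeries σ) * ((a : NCSeries σ) - 1)) := by
      rw [mul_sub, mul_one, a.inv_mul, neg_sub]
    rw [key]
    intro u hu
    have := (ha.lmul ((a⁻¹ : (NCSeries σ)ˣ) : NCSeries σ)) u hu
    show -_ = (0 : ℤ)
    rw [this, neg_zero]

theorem mem_G {k : ℕ} {a : (NCSeries σ)ˣ} :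
    a ∈ (G k : Subgroup (NCSeries σ)ˣ) ↔ LowDeg k ((a : NCSeries σ) - 1) := Iff.rfl

theorem commutator_mem_G {j k : ℕ} {a b : (NCSeries σ)ˣ}
    (ha : a ∈ (G j : Subgroup (NCSeries σ)ˣ)) (hb : b ∈ (G k : Subgroup (NCSeries σ)ˣ)) :
    ⁅a, b⁆ ∈ (G (j + k) : Subgroup (NCSeries σ)ˣ) := by
  rw [mem_G] at ha hb ⊢
  set A := ((a : NCSeries σ)) with hA
  set B := ((b : NCSeries σ)) with hB
  set Ai := ((a⁻¹ : (NCSeries σ)ˣ) : NCSeries σ) with hAi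
  set Bi := ((b⁻¹ : (NCSeries σ)ˣ) : NCSeries σ) with hBi
  have e2 : (a * b * (a⁻¹ * b⁻¹) : (NCSeries σ)ˣ) = ⁅a, b⁆ := by
    rw [commutatorElement_def]; group
  have e1 : (b * a * (a⁻¹ * b⁻¹) : (NCSeries σ)ˣ) = 1 := by group
  have h2 := congrArg (Units.val : (NCSeries σ)ˣ → NCSeries σ) e2
  have h1 := congrArg (Units.val : (NCSeries σ)ˣ → NCSeries σ) e1
  simp only [Units.val_mul, Units.val_one] at h1 h2
  have key : ((⁅a, b⁆ : (NCSeries σ)ˣ) : NCSeries σ) - 1 =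
      ((A - 1) * (B - 1) - (B - 1) * (A - 1)) * (Ai * Bi) := by
    have hc : (A - 1) * (B - 1) - (B - 1) * (A - 1) = A * B - B * A := by noncomm_ring
    rw [hc, sub_mul, h2, h1]
  rw [key]
  exact ((ha.mul hb).sub (by rw [add_comm j k]; exact hb.mul ha)).rmul _

end NCSeries

theorem magnus_mem_G_one (N : ℕ) (w : FreeGroup (Fin N)) :
    magnus N w ∈ (NCSeries.G 1 : Subgroup (NCSeries (Fin N))ˣ) := by
  induction w with
  | C1 => rw [map_one]; exact Subgroup.one_mem _
  | of i =>
    have : magnus N (FreeGroup.of i) = NCSeries.oneAddX i := FreeGroup.lift_apply_of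
    rw [this, NCSeries.mem_G]
    intro u hu
    have hu0 : u = [] := List.length_eq_zero_iff.mp (by omega)
    subst hu0
    show (1 + NCSeries.X i - 1 : NCSeries (Fin N)) [] = 0
    have : (1 + NCSeries.X i - 1 : NCSeries (Fin N)) = NCSeries.X i := add_sub_cancel_left 1 _
    rw [this]
    simp [NCSeries.X]
  | inv_of i h =>
    rw [map_inv]; exact Subgroup.inv_mem _ h
  | mul x y hx hy =>
    rw [map_mul]; exact Subgroup.mul_mem _ hx hy

theorem magnus_lcs_aux (N : ℕ) (n : ℕ) :
    (⊤ : Subgroup (FreeGroup (Fin N))).lowerCentralSeries n ≤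
      (NCSeries.G (n + 1) : Subgroup (NCSeries (Fin N))ˣ).comap (magnus N) := by
  induction n with
  | zero => exact fun w _ => magnus_mem_G_one N w
  | succ n ih =>
    rw [Subgroup.lowerCentralSeries_succ, Subgroup.commutator_def, Subgroup.closure_le]
    rintro x ⟨p, hp, q, -, rfl⟩
    show magnus N (p * q * p⁻¹ * q⁻¹) ∈ NCSeries.G (n + 1 + 1)
    have : p * q * p⁻¹ * q⁻¹ = ⁅p, q⁆ := rfl
    rw [this, map_commutatorElement]
    exact NCSeries.commutator_mem_G (ih hp) (magnus_mem_G_one N q)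

/-- For every `k ≥ 1`: if `w ∈ F^k` (paper's lower central series, Mathlib's
`lowerCentralSeries F (k-1)`), then `μ(w) = 1 + (terms of degree ≥ k)`, i.e. the
coefficients of `μ(w)` and of `1` agree on all words of length `< k`. Consequently,
if `μ(w)` has a coefficient differing from that of `1` at some word of length `< k`
(a nonzero term of degree `d < k`), then `w ∉ F^k`. -/
theorem magnus_lcs (N k : ℕ) (hk : 1 ≤ k) :
    (∀ w ∈ (⊤ : Subgroup (FreeGroup (Fin N))).lowerCentralSeries (k - 1), ∀ u : List (Fin N),
      u.length < k →
        ((magnus N w : (NCSeries (Fin N))ˣ) : NCSeries (Fin N)) u = (1 : NCSeries (Fin N)) u) ∧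
    (∀ w : FreeGroup (Fin N),
      (∃ u : List (Fin N), u.length < k ∧
        ((magnus N w : (NCSeries (Fin N))ˣ) : NCSeries (Fin N)) u ≠ (1 : NCSeries (Fin N)) u) →
      w ∉ (⊤ : Subgroup (FreeGroup (Fin N))).lowerCentralSeries (k - 1)) := by
  obtain ⟨n, rfl⟩ : ∃ n, k = n + 1 := ⟨k - 1, by omega⟩
  have hn : n + 1 - 1 = n := by omega
  rw [hn]
  constructor
  · intro w hw u hu
    have h := magnus_lcs_aux N n hw
    rw [Subgroup.mem_comap, NCSeries.mem_G] at h
    have := h u hu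
    rw [NCSeries.sub_def] at this
    linarith
  · rintro w ⟨u, hu, hne⟩ hw
    apply hne
    have h := magnus_lcs_aux N n hw
    rw [Subgroup.mem_comap, NCSeries.mem_G] at h
    have := h u hu
    rw [NCSeries.sub_def] at this
    linarith

end
end

section
/- Let F be the free group on generators m_1 and m_2, and define inductively m = [m_1, m_2]. More generally, define a sequence of elements by Bing doubling: starting from one generator, each doubling step replaces a generator g by the commutator [g_1, g_2] of two new generators. After n doubling steps (producing 2^n generators), the resulting element lies in F^{2^n} but not in F^{2^n + 1} of the free group on those 2^n generators. -/
open Matrix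
open scoped commutatorElement

/-- matrix unit with ℕ indices (zero if out of range) -/
def Eb (N a b : ℕ) : Matrix (Fin N) (Fin N) ℤ :=
  Matrix.of fun i j => if (i : ℕ) = a ∧ (j : ℕ) = b then 1 else 0

lemma Eb_mul_zero {N b c : ℕ} (a d : ℕ) (h : b ≠ c) : Eb N a b * Eb N c d = 0 := by
  ext i j
  rw [Matrix.mul_apply]
  refine Finset.sum_eq_zero fun l _ => ?_
  simp only [Eb, Matrix.of_apply]
  split_ifs with h1 h2 <;> simp_all

lemma Eb_mul_same {N b : ℕ} (a d : ℕ) (hb : b < N) : Eb N a b * Eb N b d = Eb N a d := by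
  ext i j
  rw [Matrix.mul_apply, Finset.sum_eq_single (⟨b, hb⟩ : Fin N)]
  · simp only [Eb, Matrix.of_apply]
    split_ifs <;> simp_all
  · intro l _ hl
    simp only [Eb, Matrix.of_apply]
    have : ¬ (l : ℕ) = b := fun hc => hl (Fin.ext hc)
    split_ifs with h1 h2 <;> first | rfl | (exact absurd h1.2 this) | ring
  · simp

/-- `a` vanishes within distance `< k` of the diagonal (and below). -/
def Band (N k : ℕ) (a : Matrix (Fin N) (Fin N) ℤ) : Prop :=
  ∀ i j : Fin N, (j : ℕ) < (i : ℕ) + k → a i j = 0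

lemma band_zero {N k : ℕ} : Band N k 0 := fun _ _ _ => rfl

lemma band_mono {N k l : ℕ} (h : k ≤ l) {a} (ha : Band N l a) : Band N k a :=
  fun i j hij => ha i j (by omega)

lemma band_add {N k : ℕ} {a b} (ha : Band N k a) (hb : Band N k b) : Band N k (a + b) :=
  fun i j hij => by simp [Matrix.add_apply, ha i j hij, hb i j hij]

lemma band_neg {N k : ℕ} {a} (ha : Band N k a) : Band N k (-a) :=
  fun i j hij => by simp [Matrix.neg_apply, ha i j hij]

lemma band_sub {N k : ℕ} {a b} (ha : Band N k a) (hb : Band N k b) : Band N k (a - b) := by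
  rw [sub_eq_add_neg]; exact band_add ha (band_neg hb)

lemma band_one {N : ℕ} : Band N 0 1 := by
  intro i j hij
  exact Matrix.one_apply_ne (by intro h; subst h; omega)

lemma band_mul {N p q : ℕ} {a b} (ha : Band N p a) (hb : Band N q b) : Band N (p + q) (a * b) := by
  intro i j hij
  rw [Matrix.mul_apply]
  refine Finset.sum_eq_zero fun l _ => ?_
  by_cases hl : (l : ℕ) < (i : ℕ) + p
  · rw [ha i l hl, zero_mul]
  · rw [hb l j (by omega), mul_zero]

lemma band_pow {N : ℕ} {a} (ha : Band N 1 a) (m : ℕ) : Band N m (a ^ m) := by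
  induction m with
  | zero => simpa using band_one
  | succ m ih => rw [pow_succ]; exact band_mul ih ha

lemma band_eq_zero {N : ℕ} {a} (ha : Band N N a) : a = 0 := by
  ext i j
  exact ha i j (by omega)

lemma band_E {N k a b : ℕ} (h : a + k ≤ b) : Band N k (Eb N a b) := by
  intro i j hij
  simp only [Eb, Matrix.of_apply]
  split_ifs with h1
  · omega
  · rfl

/-- elementary transvection unit `1 + E_{a,b}` -/
def gen (N a b : ℕ) (h : a ≠ b) : (Matrix (Fin N) (Fin N) ℤ)ˣ where
  val := 1 + Eb N a b
  inv := 1 - Eb N a b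
  val_inv := by
    have : Eb N a b * Eb N a b = 0 := Eb_mul_zero a b (Ne.symm h)
    noncomm_ring [this]
  inv_val := by
    have : Eb N a b * Eb N a b = 0 := Eb_mul_zero a b (Ne.symm h)
    noncomm_ring [this]

/-- units that are `1 + (band ≥ k+1)` -/
def bandSubgroup (N k : ℕ) : Subgroup (Matrix (Fin N) (Fin N) ℤ)ˣ where
  carrier := {u | Band N (k + 1) ((u : Matrix (Fin N) (Fin N) ℤ) - 1)}
  one_mem' := by simpa using band_zero
  mul_mem' := by
    intro u v hu hv
    have key : ((u * v : _ˣ) : Matrix (Fin N) (Fin N) ℤ) - 1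
        = ((u : Matrix (Fin N) (Fin N) ℤ) - 1) * ((v : Matrix (Fin N) (Fin N) ℤ) - 1)
          + ((u : Matrix (Fin N) (Fin N) ℤ) - 1) + ((v : Matrix (Fin N) (Fin N) ℤ) - 1) := by
      push_cast
      noncomm_ring
    rw [Set.mem_setOf_eq, key]
    exact band_add (band_add (band_mono (by omega) (band_mul hu hv)) hu) hv
  inv_mem' := by
    intro u hu
    have hu' : Band N (k + 1) ((u : Matrix (Fin N) (Fin N) ℤ) - 1) := hu
    have hb1 : Band N 1 ((u : Matrix (Fin N) (Fin N) ℤ) - 1) := band_mono (by omega) hu'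
    set a : Matrix (Fin N) (Fin N) ℤ := (u : Matrix (Fin N) (Fin N) ℤ) - 1 with ha
    have haN : a ^ N = 0 := band_eq_zero (band_pow hb1 N)
    have hinv : ((u⁻¹ : _ˣ) : Matrix (Fin N) (Fin N) ℤ)
        = ∑ m ∈ Finset.range N, (-a) ^ m := by
      apply Units.inv_eq_of_mul_eq_one_left
      have hg := geom_sum_mul (-a) N
      have : (-a) ^ N = 0 := by
        rcases Nat.even_or_odd N with h | h
        · rw [h.neg_pow, haN]
        · rw [h.neg_pow, haN, neg_zero]
      rw [this, zero_sub] at hg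
      have hu1 : (u : Matrix (Fin N) (Fin N) ℤ) = 1 + a := by rw [ha]; abel
      rw [hu1]
      have : (1 : Matrix (Fin N) (Fin N) ℤ) + a = -((-a) - 1) := by abel
      rw [this, mul_neg, hg, neg_neg]
    have hb0inv : Band N 0 ((u⁻¹ : _ˣ) : Matrix (Fin N) (Fin N) ℤ) := by
      rw [hinv]
      intro i j hij
      rw [Matrix.sum_apply]
      refine Finset.sum_eq_zero fun m _ => ?_
      rcases Nat.eq_zero_or_pos m with rfl | hm
      · simpa using band_one i j hij
      · have : Band N 1 ((-a) ^ m) := band_mono hm (band_pow (band_neg hb1) m)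
        exact this i j (by omega)
    have key : ((u⁻¹ : _ˣ) : Matrix (Fin N) (Fin N) ℤ) - 1
        = -(((u⁻¹ : _ˣ) : Matrix (Fin N) (Fin N) ℤ) * a) := by
      have h1 : ((u⁻¹ : _ˣ) : Matrix (Fin N) (Fin N) ℤ) * (u : Matrix (Fin N) (Fin N) ℤ) = 1 := by
        push_cast [← Units.val_mul]
        simp
      rw [ha, mul_sub, h1, mul_one]
      abel
    rw [Set.mem_setOf_eq, key]
    exact band_neg (by simpa using band_mul hb0inv hu')

lemma mem_bandSubgroup {N k : ℕ} {u : (Matrix (Fin N) (Fin N) ℤ)ˣ} :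
    u ∈ bandSubgroup N k ↔ Band N (k + 1) ((u : Matrix (Fin N) (Fin N) ℤ) - 1) := Iff.rfl

lemma gen_mem_bandSubgroup {N a b : ℕ} (h : a < b) :
    gen N a b (by omega) ∈ bandSubgroup N 0 := by
  rw [mem_bandSubgroup]
  have : ((gen N a b (by omega) : _ˣ) : Matrix (Fin N) (Fin N) ℤ) - 1 = Eb N a b := by
    simp [gen]
  rw [this]
  exact band_E (by omega)

lemma bandSubgroup_mono {N k l : ℕ} (h : k ≤ l) : bandSubgroup N l ≤ bandSubgroup N k := by
  intro u hu
  exact band_mono (by omega) hu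

lemma commutator_mem_bandSubgroup {N k : ℕ} {u w : (Matrix (Fin N) (Fin N) ℤ)ˣ}
    (hu : u ∈ bandSubgroup N k) (hw : w ∈ bandSubgroup N 0) :
    ⁅u, w⁆ ∈ bandSubgroup N (k + 1) := by
  have huw : u⁻¹ * w⁻¹ ∈ bandSubgroup N 0 :=
    mul_mem (bandSubgroup_mono (Nat.zero_le k) (inv_mem hu)) (inv_mem hw)
  have hu' : Band N (k + 1) ((u : Matrix (Fin N) (Fin N) ℤ) - 1) := hu
  have hw' : Band N 1 ((w : Matrix (Fin N) (Fin N) ℤ) - 1) := hw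
  have hc : Band N 1 (((u⁻¹ * w⁻¹ : _ˣ) : Matrix (Fin N) (Fin N) ℤ) - 1) := huw
  rw [mem_bandSubgroup]
  have key : ((⁅u, w⁆ : _ˣ) : Matrix (Fin N) (Fin N) ℤ) - 1
      = (((u : Matrix (Fin N) (Fin N) ℤ) - 1) * ((w : Matrix (Fin N) (Fin N) ℤ) - 1)
          - ((w : Matrix (Fin N) (Fin N) ℤ) - 1) * ((u : Matrix (Fin N) (Fin N) ℤ) - 1))
        * ((u⁻¹ * w⁻¹ : _ˣ) : Matrix (Fin N) (Fin N) ℤ) := by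
    have h1 : ((w * u * (u⁻¹ * w⁻¹) : _ˣ) : Matrix (Fin N) (Fin N) ℤ) = 1 := by
      norm_cast
      rw [mul_assoc, mul_inv_cancel_left, mul_inv_cancel]
      rfl
    have h2 : ((⁅u, w⁆ : _ˣ) : Matrix (Fin N) (Fin N) ℤ)
        = ((u * w : _ˣ) : Matrix (Fin N) (Fin N) ℤ)
          * ((u⁻¹ * w⁻¹ : _ˣ) : Matrix (Fin N) (Fin N) ℤ) := by
      rw [← Units.val_mul]
      congr 1
      group
    push_cast at h1 h2 ⊢
    rw [h2]
    have expand : ((u : Matrix (Fin N) (Fin N) ℤ) - 1) * ((w : Matrix (Fin N) (Fin N) ℤ) - 1)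
          - ((w : Matrix (Fin N) (Fin N) ℤ) - 1) * ((u : Matrix (Fin N) (Fin N) ℤ) - 1)
        = (u : Matrix (Fin N) (Fin N) ℤ) * w - (w : Matrix (Fin N) (Fin N) ℤ) * u := by
      noncomm_ring
    rw [expand, sub_mul, ← mul_assoc, h1]
  rw [key]
  have hdiff : Band N (k + 2)
      (((u : Matrix (Fin N) (Fin N) ℤ) - 1) * ((w : Matrix (Fin N) (Fin N) ℤ) - 1)
        - ((w : Matrix (Fin N) (Fin N) ℤ) - 1) * ((u : Matrix (Fin N) (Fin N) ℤ) - 1)) :=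
    band_sub (by have := band_mul hu' hw'; rwa [show k + 1 + 1 = k + 2 by omega] at this)
      (by have := band_mul hw' hu'; rwa [show 1 + (k + 1) = k + 2 by omega] at this)
  have hfac : ((u⁻¹ * w⁻¹ : _ˣ) : Matrix (Fin N) (Fin N) ℤ)
      = (((u⁻¹ * w⁻¹ : _ˣ) : Matrix (Fin N) (Fin N) ℤ) - 1) + 1 := by abel
  rw [hfac, mul_add, mul_one]
  exact band_add (band_mono (by omega) (band_mul hdiff hc)) hdiff

lemma lcs_succ' {G : Type*} [Group G] (n : ℕ) :
    Subgroup.lowerCentralSeries (⊤ : Subgroup G) (n + 1) = ⁅Subgroup.lowerCentralSeries (⊤ : Subgroup G) n, ⊤⁆ := rfl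

/-- `⁅γ m, γ n⁆ ≤ γ (m + n + 1)` for the lower central series. -/
theorem lcs_commutator_le {G : Type*} [Group G] (n : ℕ) :
    ∀ m, ⁅Subgroup.lowerCentralSeries (⊤ : Subgroup G) m, Subgroup.lowerCentralSeries (⊤ : Subgroup G) n⁆
      ≤ Subgroup.lowerCentralSeries (⊤ : Subgroup G) (m + n + 1) := by
  induction n with
  | zero =>
    intro m
    rw [Nat.add_zero, lowerCentralSeries_succ]
    exact Subgroup.commutator_mono le_rfl le_top
  | succ n ih =>
    intro m
    set K := Subgroup.lowerCentralSeries (⊤ : Subgroup G) (m + (n + 1) + 1) with hK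
    have hKnorm : K.Normal := inferInstance
    let π := QuotientGroup.mk' K
    have hker : π.ker = K := QuotientGroup.ker_mk' K
    have hmapK : ∀ l, m + (n + 1) + 1 ≤ l →
        Subgroup.map π (Subgroup.lowerCentralSeries (⊤ : Subgroup G) l) = ⊥ := by
      intro l hl
      rw [Subgroup.map_eq_bot_iff, hker, hK]
      exact lowerCentralSeries_antitone _ hl
    have h1 : ⁅⁅Subgroup.map π ⊤, Subgroup.map π (Subgroup.lowerCentralSeries (⊤ : Subgroup G) m)⁆,
        Subgroup.map π (Subgroup.lowerCentralSeries (⊤ : Subgroup G) n)⁆ = ⊥ := by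
      rw [Subgroup.commutator_comm (Subgroup.map π ⊤), ← Subgroup.map_commutator,
        ← lcs_succ', ← Subgroup.map_commutator]
      rw [← le_bot_iff, ← hmapK (m + 1 + n + 1) (by omega)]
      exact Subgroup.map_mono (ih (m + 1))
    have h2 : ⁅⁅Subgroup.map π (Subgroup.lowerCentralSeries (⊤ : Subgroup G) m),
        Subgroup.map π (Subgroup.lowerCentralSeries (⊤ : Subgroup G) n)⁆, Subgroup.map π ⊤⁆ = ⊥ := by
      rw [← Subgroup.map_commutator, ← Subgroup.map_commutator]
      rw [← le_bot_iff, ← hmapK (m + (n + 1) + 1) le_rfl]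
      refine Subgroup.map_mono ?_
      calc ⁅⁅Subgroup.lowerCentralSeries (⊤ : Subgroup G) m, Subgroup.lowerCentralSeries (⊤ : Subgroup G) n⁆, ⊤⁆
          ≤ ⁅Subgroup.lowerCentralSeries (⊤ : Subgroup G) (m + n + 1), ⊤⁆ :=
            Subgroup.commutator_mono (ih m) le_rfl
        _ = Subgroup.lowerCentralSeries (⊤ : Subgroup G) (m + n + 2) := (lcs_succ' _).symm
        _ ≤ Subgroup.lowerCentralSeries (⊤ : Subgroup G) (m + (n + 1) + 1) := le_of_eq (by ring_nf)
    have h3 : ⁅⁅Subgroup.map π (Subgroup.lowerCentralSeries (⊤ : Subgroup G) n), Subgroup.map π ⊤⁆,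
        Subgroup.map π (Subgroup.lowerCentralSeries (⊤ : Subgroup G) m)⁆ = ⊥ :=
      Subgroup.commutator_commutator_eq_bot_of_rotate h1 h2
    have h4 : Subgroup.map π ⁅Subgroup.lowerCentralSeries (⊤ : Subgroup G) m, Subgroup.lowerCentralSeries (⊤ : Subgroup G) (n + 1)⁆ = ⊥ := by
      rw [Subgroup.map_commutator, lcs_succ', Subgroup.map_commutator,
        Subgroup.commutator_comm]
      exact h3
    rw [Subgroup.map_eq_bot_iff, hker] at h4
    exact h4


open scoped commutatorElement in
/-- The result of `n` Bing doubling steps: starting from a single free generator, each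
step replaces a generator `g` by the commutator `[g₁, g₂]` of two fresh generators,
producing an iterated commutator in the free group on `2^n` generators. -/
def bing : (n : ℕ) → FreeGroup (Fin (2 ^ n))
  | 0 => FreeGroup.of ⟨0, by norm_num⟩
  | n + 1 =>
    ⁅FreeGroup.map (fun i : Fin (2 ^ n) =>
        (⟨i.1, by have := i.2; have h : 2 ^ (n + 1) = 2 ^ n + 2 ^ n := by rw [pow_succ]; ring
                  omega⟩ : Fin (2 ^ (n + 1)))) (bing n),
      FreeGroup.map (fun i : Fin (2 ^ n) =>
        (⟨2 ^ n + i.1, by have := i.2; have h : 2 ^ (n + 1) = 2 ^ n + 2 ^ n := by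
                            rw [pow_succ]; ring
                          omega⟩ : Fin (2 ^ (n + 1)))) (bing n)⁆

lemma lift_map {α β : Type*} {G : Type*} [Group G] (f : α → β) (t : β → G)
    (x : FreeGroup α) :
    FreeGroup.lift t (FreeGroup.map f x) = FreeGroup.lift (t ∘ f) x := by
  have : (FreeGroup.lift t).comp (FreeGroup.map f) = FreeGroup.lift (t ∘ f) := by
    apply FreeGroup.ext_hom
    intro a
    simp
  exact DFunLike.congr_fun this x

lemma commutator_gen {N a b c : ℕ} (hab : a < b) (hbc : b < c) (hbN : b < N) :
    ⁅gen N a b (by omega), gen N b c (by omega)⁆ = gen N a c (by omega) := by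
  apply Units.ext
  have e12 : Eb N a b * Eb N b c = Eb N a c := Eb_mul_same a c hbN
  have e21 : Eb N b c * Eb N a b = 0 := Eb_mul_zero b b (by omega)
  have e11 : Eb N a b * Eb N a b = 0 := Eb_mul_zero a b (by omega)
  have e22 : Eb N b c * Eb N b c = 0 := Eb_mul_zero b c (by omega)
  have e13 : Eb N a b * Eb N a c = 0 := Eb_mul_zero a c (by omega)
  have e31 : Eb N a c * Eb N a b = 0 := Eb_mul_zero a b (by omega)
  have e23 : Eb N b c * Eb N a c = 0 := Eb_mul_zero b c (by omega)
  have e32 : Eb N a c * Eb N b c = 0 := Eb_mul_zero a c (by omega)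
  have e33 : Eb N a c * Eb N a c = 0 := Eb_mul_zero a c (by omega)
  simp only [commutatorElement_def, Units.val_mul]
  show (1 + Eb N a b) * (1 + Eb N b c) * (1 - Eb N a b) * (1 - Eb N b c) = 1 + Eb N a c
  noncomm_ring [e12, e21, e11, e22, e13, e31, e23, e32, e33]

lemma gen_congr {N a b a' b' : ℕ} (ha : a = a') (hb : b = b') (h : a ≠ b) :
    gen N a b h = gen N a' b' (ha ▸ hb ▸ h) := by subst ha; subst hb; rfl

lemma lift_bing {N : ℕ} : ∀ (n a : ℕ), (h : a + 2 ^ n < N) →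
    FreeGroup.lift (fun i : Fin (2 ^ n) => gen N (a + i) (a + i + 1) (by omega)) (bing n)
      = gen N a (a + 2 ^ n) (by have := Nat.one_le_two_pow (n := n); omega)
  | 0, a, h => by
    rw [bing, FreeGroup.lift_apply_of]
    exact gen_congr (by simp) (by simp) _
  | n + 1, a, h => by
    have hpow : 2 ^ (n + 1) = 2 ^ n + 2 ^ n := by rw [pow_succ]; ring
    have hpos : 1 ≤ 2 ^ n := Nat.one_le_two_pow
    rw [bing, map_commutatorElement, lift_map, lift_map]
    have h1 : (fun i : Fin (2 ^ (n + 1)) => gen N (a + i) (a + i + 1) (by omega)) ∘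
        (fun i : Fin (2 ^ n) => (⟨i.1, by omega⟩ : Fin (2 ^ (n + 1)))) =
        fun i : Fin (2 ^ n) => gen N (a + i) (a + i + 1) (by omega) := by
      funext i; rfl
    have h2 : (fun i : Fin (2 ^ (n + 1)) => gen N (a + i) (a + i + 1) (by omega)) ∘
        (fun i : Fin (2 ^ n) => (⟨2 ^ n + i.1, by omega⟩ : Fin (2 ^ (n + 1)))) =
        fun i : Fin (2 ^ n) => gen N (a + 2 ^ n + i) (a + 2 ^ n + i + 1) (by omega) := by
      funext i
      exact gen_congr (by simp; omega) (by simp; omega) (by simp)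
    rw [h1, h2, lift_bing n a (by omega), lift_bing n (a + 2 ^ n) (by omega)]
    have := commutator_gen (N := N) (a := a) (b := a + 2 ^ n) (c := a + 2 ^ n + 2 ^ n)
      (by omega) (by omega) (by omega)
    rw [this]
    exact gen_congr rfl (by omega) _

lemma bing_mem_lcs : ∀ n : ℕ, bing n ∈ Subgroup.lowerCentralSeries (⊤ : Subgroup (FreeGroup (Fin (2 ^ n)))) (2 ^ n - 1)
  | 0 => by simp [bing]
  | n + 1 => by
    have hpow : 2 ^ (n + 1) = 2 ^ n + 2 ^ n := by rw [pow_succ]; ring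
    have hpos : 1 ≤ 2 ^ n := Nat.one_le_two_pow
    rw [bing]
    have ih := bing_mem_lcs n
    have hm : ∀ (f : Fin (2 ^ n) → Fin (2 ^ (n + 1))),
        FreeGroup.map f (bing n) ∈
          Subgroup.lowerCentralSeries (⊤ : Subgroup (FreeGroup (Fin (2 ^ (n + 1))))) (2 ^ n - 1) := by
      intro f
      have := Subgroup.lowerCentralSeries.map (FreeGroup.map f) (2 ^ n - 1)
      exact this ⟨bing n, ih, rfl⟩
    have hcomm := lcs_commutator_le (G := FreeGroup (Fin (2 ^ (n + 1)))) (2 ^ n - 1) (2 ^ n - 1)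
    have h2 : 2 ^ n - 1 + (2 ^ n - 1) + 1 = 2 ^ (n + 1) - 1 := by omega
    exact lowerCentralSeries_antitone _ (le_of_eq h2.symm)
      (hcomm (Subgroup.commutator_mem_commutator (hm _) (hm _)))

/-- After `n` Bing doubling steps, the resulting iterated commutator of weight `2^n` lies
in `F^{2^n}` but not in `F^{2^n + 1}` of the free group on the `2^n` generators
(paper's `F^k` is Mathlib's `lowerCentralSeries F (k-1)`). -/
theorem bing_mem_lcs_not_mem_succ (n : ℕ) :
    bing n ∈ Subgroup.lowerCentralSeries (⊤ : Subgroup (FreeGroup (Fin (2 ^ n)))) (2 ^ n - 1) ∧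
    bing n ∉ Subgroup.lowerCentralSeries (⊤ : Subgroup (FreeGroup (Fin (2 ^ n)))) (2 ^ n) := by
  refine ⟨bing_mem_lcs n, fun hmem => ?_⟩
  have hpos : 1 ≤ 2 ^ n := Nat.one_le_two_pow
  set N := 2 ^ n + 1 with hN
  set ψ : FreeGroup (Fin (2 ^ n)) →* (Matrix (Fin N) (Fin N) ℤ)ˣ :=
    FreeGroup.lift (fun i : Fin (2 ^ n) => gen N (0 + i) (0 + i + 1) (by omega)) with hψ
  -- every image lies in bandSubgroup N 0
  have hrange : ∀ x : FreeGroup (Fin (2 ^ n)), ψ x ∈ bandSubgroup N 0 := by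
    intro x
    have : ψ.range ≤ bandSubgroup N 0 := by
      rw [hψ]
      apply FreeGroup.range_lift_le
      rintro _ ⟨i, rfl⟩
      exact gen_mem_bandSubgroup (by omega)
    exact this ⟨x, rfl⟩
  -- LCS maps into band subgroups
  have hlcs : ∀ k : ℕ, ∀ x ∈ Subgroup.lowerCentralSeries (⊤ : Subgroup (FreeGroup (Fin (2 ^ n)))) k,
      ψ x ∈ bandSubgroup N k := by
    intro k
    induction k with
    | zero => intro x _; exact hrange x
    | succ k ih =>
      intro x hx
      rw [lcs_succ'] at hx
      have : Subgroup.lowerCentralSeries (⊤ : Subgroup (FreeGroup (Fin (2 ^ n)))) k ≤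
          (bandSubgroup N k).comap ψ := fun y hy => ih y hy
      have hle : ⁅Subgroup.lowerCentralSeries (⊤ : Subgroup (FreeGroup (Fin (2 ^ n)))) k, (⊤ : Subgroup _)⁆ ≤
          (bandSubgroup N (k + 1)).comap ψ := by
        rw [Subgroup.commutator_le]
        intro g hg h _
        rw [Subgroup.mem_comap, map_commutatorElement]
        exact commutator_mem_bandSubgroup (ih g hg) (hrange h)
      exact hle hx
  have hval := lift_bing (N := N) n 0 (by omega)
  have himg : ψ (bing n) = gen N 0 (0 + 2 ^ n) (by omega) := hval
  have hband := hlcs (2 ^ n) (bing n) hmem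
  rw [himg, mem_bandSubgroup] at hband
  have : ((gen N 0 (0 + 2 ^ n) (by omega) : _ˣ) : Matrix (Fin N) (Fin N) ℤ) - 1
      = Eb N 0 (0 + 2 ^ n) := by
    simp [gen]
  rw [this] at hband
  have hEzero : Eb N 0 (0 + 2 ^ n) = 0 := band_eq_zero (band_mono (by omega) hband)
  have : Eb N 0 (0 + 2 ^ n) ⟨0, by omega⟩ ⟨2 ^ n, by omega⟩ = 1 := by
    simp [Eb]
  rw [hEzero] at this
  simp at this
end

section
/- Let G and H be groups and φ : G → H a homomorphism inducing an isomorphism on abelianizations and a surjection H_2(G;ℤ) → H_2(H;ℤ) on second group homology. Then for each finite k, φ induces an isomorphism G/G^k ≅ H/H^k. -/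
/-- The kernel `R` of the canonical presentation `FreeGroup G →* G` (sending each
generator `g` to `g`), so that `G ≅ FreeGroup G / R`. -/
def presentationKernel (G : Type*) [Group G] : Subgroup (FreeGroup G) :=
  (FreeGroup.lift (id : G → G)).ker

/-- The subgroup `R ⊓ [F, F]` of `F = FreeGroup G` appearing in Hopf's formula. -/
def hopfSubgroup (G : Type*) [Group G] : Subgroup (FreeGroup G) :=
  presentationKernel G ⊓ commutator (FreeGroup G)

instance (G : Type*) [Group G] : (presentationKernel G).Normal :=
  MonoidHom.normal_ker _

/-- The second group homology `H₂(G; ℤ)`, defined via Hopf's formula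
`H₂(G; ℤ) ≅ (R ⊓ [F, F]) / [F, R]` for the canonical presentation `G = F / R`,
`F = FreeGroup G`. -/
def H2 (G : Type*) [Group G] : Type _ :=
  ↥(hopfSubgroup G) ⧸
    ((⁅(⊤ : Subgroup (FreeGroup G)), presentationKernel G⁆).subgroupOf (hopfSubgroup G))

instance (G : Type*) [Group G] : Group (H2 G) := by
  unfold H2; infer_instance



open Subgroup
open scoped commutatorElement

section Aux

variable {F K : Type*} [Group F] [Group K]

/-- Image of the lower central series under a surjective hom. -/
private lemma lcs_succ'_s13 (n : ℕ) :
    (⊤ : Subgroup F).lowerCentralSeries (n + 1) = ⁅(⊤ : Subgroup F).lowerCentralSeries n, (⊤ : Subgroup F)⁆ := rfl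

private lemma map_lcs (f : F →* K) (hf : Function.Surjective f) (n : ℕ) :
    ((⊤ : Subgroup F).lowerCentralSeries n).map f = (⊤ : Subgroup K).lowerCentralSeries n := by
  induction n with
  | zero => simpa using Subgroup.map_top_of_surjective f hf
  | succ n ih =>
      rw [lcs_succ'_s13, lcs_succ'_s13, Subgroup.map_commutator, ih,
        Subgroup.map_top_of_surjective f hf]

/-- If `⁅S,⊤⁆ ≤ N` then images of elements of `S` are central in `F ⧸ N`. -/
private lemma central_mk {N S : Subgroup F} [N.Normal]
    (hSN : ⁅S, (⊤ : Subgroup F)⁆ ≤ N) {s : F} (hs : s ∈ S) :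
    (s : F ⧸ N) ∈ Subgroup.center (F ⧸ N) := by
  rw [Subgroup.mem_center_iff]
  intro z
  obtain ⟨x, rfl⟩ := QuotientGroup.mk_surjective z
  rw [← QuotientGroup.mk_mul, ← QuotientGroup.mk_mul, QuotientGroup.eq]
  have e : (x * s)⁻¹ * (s * x) = ⁅s⁻¹, x⁻¹⁆ := by group
  rw [e]
  exact hSN (Subgroup.commutator_mem_commutator (inv_mem hs) (Subgroup.mem_top _))

private lemma comm_central_left {Q : Type*} [Group Q] (a c : Q) {b : Q}
    (hb : b ∈ Subgroup.center Q) : ⁅a * b, c⁆ = ⁅a, c⁆ := by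
  have h := Subgroup.mem_center_iff.mp hb c
  calc ⁅a * b, c⁆ = a * (b * c) * b⁻¹ * a⁻¹ * c⁻¹ := by group
    _ = a * (c * b) * b⁻¹ * a⁻¹ * c⁻¹ := by rw [← h]
    _ = ⁅a, c⁆ := by group

private lemma comm_central_right {Q : Type*} [Group Q] (a c : Q) {b : Q}
    (hb : b ∈ Subgroup.center Q) : ⁅c, a * b⁆ = ⁅c, a⁆ := by
  have h := Subgroup.mem_center_iff.mp hb c⁻¹
  calc ⁅c, a * b⁆ = c * a * (b * c⁻¹) * b⁻¹ * a⁻¹ := by group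
    _ = c * a * (c⁻¹ * b) * b⁻¹ * a⁻¹ := by rw [← h]
    _ = ⁅c, a⁆ := by group

private lemma commutator_top_sup_le (A B : Subgroup F) [A.Normal] [B.Normal] :
    ⁅(⊤ : Subgroup F), A ⊔ B⁆ ≤ ⁅(⊤ : Subgroup F), A⁆ ⊔ ⁅(⊤ : Subgroup F), B⁆ := by
  rw [Subgroup.commutator_le]
  intro g _ y hy
  have hy' : y ∈ (↑(A ⊔ B) : Set F) := hy
  rw [Subgroup.mul_normal] at hy'
  obtain ⟨a, ha, b, hb, rfl⟩ := hy'
  have key : ⁅g, a * b⁆ = ⁅g, a⁆ * (a * ⁅g, b⁆ * a⁻¹) := by group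
  rw [key]
  refine mul_mem (Subgroup.mem_sup_left ?_) (Subgroup.mem_sup_right ?_)
  · exact Subgroup.commutator_mem_commutator (Subgroup.mem_top g) ha
  · exact (Subgroup.commutator_normal ⊤ B).conj_mem _
      (Subgroup.commutator_mem_commutator (Subgroup.mem_top g) hb) a

/-- If `k : F →* F` is congruent to the identity modulo the normal subgroup `S`, then
on the commutator subgroup it is congruent to the identity modulo `⁅⊤, S⁆`. -/
private lemma ker_shift (k : F →* F) (S : Subgroup F) [S.Normal]
    (hk : ∀ w, (k w)⁻¹ * w ∈ S) {c : F}
    (hc : c ∈ ⁅(⊤ : Subgroup F), (⊤ : Subgroup F)⁆) :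
    (k c)⁻¹ * c ∈ ⁅(⊤ : Subgroup F), S⁆ := by
  set N : Subgroup F := ⁅(⊤ : Subgroup F), S⁆ with hN
  have hSN : ⁅S, (⊤ : Subgroup F)⁆ ≤ N := (Subgroup.commutator_comm S ⊤).le
  have hcent : ∀ {s : F}, s ∈ S → ((s : F ⧸ N) ∈ Subgroup.center (F ⧸ N)) :=
    fun hs => central_mk hSN hs
  let D : F →* F ⧸ N :=
    { toFun := fun w => QuotientGroup.mk ((k w)⁻¹ * w)
      map_one' := by simp
      map_mul' := by
        intro w₁ w₂
        have e : (k (w₁ * w₂))⁻¹ * (w₁ * w₂)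
            = (k w₂)⁻¹ * ((k w₁)⁻¹ * w₁) * w₂ := by
          rw [map_mul]; group
        show (QuotientGroup.mk ((k (w₁ * w₂))⁻¹ * (w₁ * w₂)) : F ⧸ N)
            = QuotientGroup.mk ((k w₁)⁻¹ * w₁) * QuotientGroup.mk ((k w₂)⁻¹ * w₂)
        rw [e]
        have h1 := Subgroup.mem_center_iff.mp (hcent (hk w₁))
        calc (QuotientGroup.mk ((k w₂)⁻¹ * ((k w₁)⁻¹ * w₁) * w₂) : F ⧸ N)
            = (QuotientGroup.mk (k w₂))⁻¹ * QuotientGroup.mk ((k w₁)⁻¹ * w₁)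
                * QuotientGroup.mk w₂ := by
              rw [← QuotientGroup.mk_inv, ← QuotientGroup.mk_mul, ← QuotientGroup.mk_mul]
          _ = QuotientGroup.mk ((k w₁)⁻¹ * w₁)
                * ((QuotientGroup.mk (k w₂))⁻¹ * QuotientGroup.mk w₂) := by
              rw [h1 (QuotientGroup.mk (k w₂))⁻¹]; group
          _ = QuotientGroup.mk ((k w₁)⁻¹ * w₁) * QuotientGroup.mk ((k w₂)⁻¹ * w₂) := by
              rw [← QuotientGroup.mk_inv, ← QuotientGroup.mk_mul] }
  have hD : ∀ x y : F, D ⁅x, y⁆ = 1 := by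
    intro x y
    rw [map_commutatorElement]
    refine commutatorElement_eq_one_iff_commute.mpr ?_
    exact (Subgroup.mem_center_iff.mp (hcent (hk x)) (D y)).symm
  have hker : ⁅(⊤ : Subgroup F), (⊤ : Subgroup F)⁆ ≤ D.ker := by
    rw [Subgroup.commutator_le]
    intro x _ y _
    exact hD x y
  exact (QuotientGroup.eq_one_iff _).mp (hker hc)

end Aux

section Surj


variable {G H : Type*} [Group G] [Group H] (φ : G →* H)

private lemma ab_surj (hsur : Function.Surjective (Abelianization.map φ)) :
    ∀ y : H, ∃ g : G, (φ g)⁻¹ * y ∈ commutator H := by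
  intro y
  obtain ⟨a, ha⟩ := hsur (Abelianization.of y)
  have hofsur : ∀ a : Abelianization G, ∃ g, Abelianization.of g = a := fun a =>
    QuotientGroup.induction_on a fun g => ⟨g, rfl⟩
  obtain ⟨g, rfl⟩ := hofsur a
  refine ⟨g, ?_⟩
  rw [Abelianization.map_of] at ha
  have h1 : Abelianization.of ((φ g)⁻¹ * y) = 1 := by
    rw [map_mul, map_inv, ha]; group
  exact (QuotientGroup.eq_one_iff _).mp h1

private lemma range_sup_lcs (hsur : Function.Surjective (Abelianization.map φ)) (n : ℕ) :
    φ.range ⊔ (⊤ : Subgroup H).lowerCentralSeries n = ⊤ := by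
  induction n with
  | zero => simp
  | succ n ih =>
    rw [eq_top_iff]
    have hcomm : ⁅(⊤ : Subgroup H), (⊤ : Subgroup H)⁆
        ≤ φ.range ⊔ (⊤ : Subgroup H).lowerCentralSeries (n + 1) := by
      rw [Subgroup.commutator_le]
      intro g1 _ g2 _
      have h1 : g1 ∈ (↑(φ.range ⊔ (⊤ : Subgroup H).lowerCentralSeries n) : Set H) := by
        rw [ih]; trivial
      have h2 : g2 ∈ (↑(φ.range ⊔ (⊤ : Subgroup H).lowerCentralSeries n) : Set H) := by
        rw [ih]; trivial
      rw [Subgroup.mul_normal] at h1 h2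
      obtain ⟨u1, hu1, b1, hb1, rfl⟩ := h1
      obtain ⟨u2, hu2, b2, hb2, rfl⟩ := h2
      obtain ⟨a1, rfl⟩ := hu1
      obtain ⟨a2, rfl⟩ := hu2
      set N := (⊤ : Subgroup H).lowerCentralSeries (n + 1) with hN
      have hSN : ⁅(⊤ : Subgroup H).lowerCentralSeries n, (⊤ : Subgroup H)⁆ ≤ N := (lcs_succ'_s13 n).ge
      have hc1 : ((b1 : H) : H ⧸ N) ∈ Subgroup.center _ := central_mk hSN hb1
      have hc2 : ((b2 : H) : H ⧸ N) ∈ Subgroup.center _ := central_mk hSN hb2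
      have e : (QuotientGroup.mk ⁅φ a1 * b1, φ a2 * b2⁆ : H ⧸ N)
          = QuotientGroup.mk (φ ⁅a1, a2⁆) := by
        rw [map_commutatorElement φ a1 a2]
        have e1 : (QuotientGroup.mk ⁅φ a1 * b1, φ a2 * b2⁆ : H ⧸ N)
            = ⁅(QuotientGroup.mk (φ a1) : H ⧸ N) * QuotientGroup.mk b1,
               (QuotientGroup.mk (φ a2) : H ⧸ N) * QuotientGroup.mk b2⁆ := by
          rfl
        rw [e1, comm_central_left _ _ hc1, comm_central_right _ _ hc2]
        rfl
      have hmem : (φ ⁅a1, a2⁆)⁻¹ * ⁅φ a1 * b1, φ a2 * b2⁆ ∈ N :=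
        QuotientGroup.eq.mp e.symm
      have efin : ⁅φ a1 * b1, φ a2 * b2⁆
          = φ ⁅a1, a2⁆ * ((φ ⁅a1, a2⁆)⁻¹ * ⁅φ a1 * b1, φ a2 * b2⁆) := by group
      rw [efin]
      exact mul_mem (Subgroup.mem_sup_left ⟨⁅a1, a2⁆, rfl⟩) (Subgroup.mem_sup_right hmem)
    intro y _
    obtain ⟨g, hg⟩ := ab_surj φ hsur y
    have e : y = φ g * ((φ g)⁻¹ * y) := by group
    rw [e]
    exact mul_mem (Subgroup.mem_sup_left ⟨g, rfl⟩) (hcomm hg)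

private lemma stallings_surj (hsur : Function.Surjective (Abelianization.map φ)) (n : ℕ) :
    ∀ y : H, ∃ g : G, (φ g)⁻¹ * y ∈ (⊤ : Subgroup H).lowerCentralSeries n := by
  intro y
  have hy : y ∈ (↑(φ.range ⊔ (⊤ : Subgroup H).lowerCentralSeries n) : Set H) := by
    rw [range_sup_lcs φ hsur n]; trivial
  rw [Subgroup.mul_normal] at hy
  obtain ⟨u, hu, v, hv, rfl⟩ := hy
  obtain ⟨g, rfl⟩ := hu
  exact ⟨g, by simpa using hv⟩


end Surj

section Step


variable {G H : Type*} [Group G] [Group H]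

private lemma stallings_step (φ : G →* H)
    (hH2 : ∀ y ∈ hopfSubgroup H, ∃ x ∈ hopfSubgroup G,
      (FreeGroup.map φ x)⁻¹ * y ∈ ⁅(⊤ : Subgroup (FreeGroup H)), presentationKernel H⁆)
    (n : ℕ) (hn : 1 ≤ n)
    (hinj : ∀ g : G, φ g ∈ (⊤ : Subgroup H).lowerCentralSeries n → g ∈ (⊤ : Subgroup G).lowerCentralSeries n)
    (hsurj : ∀ y : H, ∃ g : G, (φ g)⁻¹ * y ∈ (⊤ : Subgroup H).lowerCentralSeries n) :
    ∀ g : G, φ g ∈ (⊤ : Subgroup H).lowerCentralSeries (n + 1) → g ∈ (⊤ : Subgroup G).lowerCentralSeries (n + 1) := by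
  classical
  intro g hg
  set π : FreeGroup G →* G := FreeGroup.lift id with hπdef
  set π' : FreeGroup H →* H := FreeGroup.lift id with hπ'def
  set f : FreeGroup G →* FreeGroup H := FreeGroup.map φ with hfdef
  have hπ : Function.Surjective π := fun a => ⟨FreeGroup.of a, by simp [hπdef]⟩
  have hπ' : Function.Surjective π' := fun a => ⟨FreeGroup.of a, by simp [hπ'def]⟩
  have hcompat : ∀ w, π' (f w) = φ (π w) := by
    have : π'.comp f = φ.comp π := by
      ext a
      simp [hπdef, hπ'def, hfdef]
    intro w
    exact DFunLike.congr_fun this w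
  -- lift g and φ g
  have hgn : g ∈ ((⊤ : Subgroup (FreeGroup G)).lowerCentralSeries n).map π := by
    rw [map_lcs π hπ]
    exact hinj g (Subgroup.lowerCentralSeries_antitone _ (Nat.le_succ n) hg)
  obtain ⟨c, hc, hπc⟩ := hgn
  have hg' : φ g ∈ ((⊤ : Subgroup (FreeGroup H)).lowerCentralSeries (n + 1)).map π' := by
    rw [map_lcs π' hπ']; exact hg
  obtain ⟨d, hd, hπ'd⟩ := hg'
  -- the Hopf element s
  set s := d⁻¹ * f c with hsdef
  have hsker : s ∈ presentationKernel H := by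
    have h1 : π' s = 1 := by
      rw [hsdef, map_mul, map_inv, hπ'd, hcompat, hπc]
      group
    exact h1
  have hfc : f c ∈ (⊤ : Subgroup (FreeGroup H)).lowerCentralSeries n :=
    Subgroup.lowerCentralSeries.map f n (Subgroup.mem_map.mpr ⟨c, hc, rfl⟩)
  have hL1 : (⊤ : Subgroup (FreeGroup H)).lowerCentralSeries n ≤ commutator (FreeGroup H) := by
    rw [← Subgroup.top_lowerCentralSeries_one]
    exact Subgroup.lowerCentralSeries_antitone _ hn
  have hscomm : s ∈ commutator (FreeGroup H) := by
    rw [hsdef]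
    exact mul_mem (inv_mem (hL1 (Subgroup.lowerCentralSeries_antitone _ (Nat.le_succ n) hd))) (hL1 hfc)
  obtain ⟨x, hx, hxw⟩ := hH2 s (Subgroup.mem_inf.mpr ⟨hsker, hscomm⟩)
  obtain ⟨hxker, hxcomm⟩ := Subgroup.mem_inf.mp hx
  -- the corrected lift c₁
  set c₁ := c * x⁻¹ with hc₁def
  have hπc₁ : π c₁ = g := by
    have hx1 : π x = 1 := hxker
    rw [hc₁def, map_mul, map_inv, hπc, hx1]
    group
  -- the subgroup S' of FreeGroup H
  set S' : Subgroup (FreeGroup H) := ((⊤ : Subgroup H).lowerCentralSeries n).comap π' with hS'def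
  haveI hS'n : S'.Normal := Subgroup.Normal.comap inferInstance π'
  have hR'S' : presentationKernel H ≤ S' := by
    intro w hw
    have h1 : π' w = 1 := hw
    exact Subgroup.mem_comap.mpr (by rw [h1]; exact one_mem _)
  have hLnS' : (⊤ : Subgroup (FreeGroup H)).lowerCentralSeries n ≤ S' := by
    intro w hw
    refine Subgroup.mem_comap.mpr ?_
    have h1 : π' w ∈ ((⊤ : Subgroup (FreeGroup H)).lowerCentralSeries n).map π' := ⟨w, hw, rfl⟩
    rwa [map_lcs π' hπ'] at h1
  have hfc₁ : f c₁ ∈ ⁅(⊤ : Subgroup (FreeGroup H)), S'⁆ := by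
    have hd' : d ∈ ⁅(⊤ : Subgroup (FreeGroup H)), S'⁆ := by
      have h1 : (⊤ : Subgroup (FreeGroup H)).lowerCentralSeries (n + 1)
          ≤ ⁅(⊤ : Subgroup (FreeGroup H)), S'⁆ := by
        rw [lcs_succ'_s13, Subgroup.commutator_comm]
        exact Subgroup.commutator_mono le_rfl hLnS'
      exact h1 hd
    have hW : ⁅(⊤ : Subgroup (FreeGroup H)), presentationKernel H⁆
        ≤ ⁅(⊤ : Subgroup (FreeGroup H)), S'⁆ :=
      Subgroup.commutator_mono le_rfl hR'S'
    have hconj : f x * ((f x)⁻¹ * s) * (f x)⁻¹ ∈ ⁅(⊤ : Subgroup (FreeGroup H)), S'⁆ :=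
      (Subgroup.commutator_normal ⊤ S').conj_mem _ (hW hxw) (f x)
    have e : f c₁ = d * (f x * ((f x)⁻¹ * s) * (f x)⁻¹) := by
      rw [hc₁def, map_mul, map_inv, hsdef]
      group
    rw [e]
    exact mul_mem hd' hconj
  -- the section h : FreeGroup H →* FreeGroup G
  choose ψ hψ using hsurj
  set h : FreeGroup H →* FreeGroup G := FreeGroup.lift (fun y => FreeGroup.of (ψ y))
    with hhdef
  have hP1 : ∀ w : FreeGroup H, (φ (π (h w)))⁻¹ * π' w ∈ (⊤ : Subgroup H).lowerCentralSeries n := by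
    have heq : (QuotientGroup.mk' ((⊤ : Subgroup H).lowerCentralSeries n)).comp (φ.comp (π.comp h))
        = (QuotientGroup.mk' ((⊤ : Subgroup H).lowerCentralSeries n)).comp π' := by
      ext y
      simp only [MonoidHom.comp_apply, hhdef, hπdef, hπ'def, FreeGroup.lift_apply_of, id_eq]
      exact QuotientGroup.eq.mpr (hψ y)
    intro w
    have h1 := DFunLike.congr_fun heq w
    simp only [MonoidHom.comp_apply, QuotientGroup.mk'_apply] at h1
    exact QuotientGroup.eq.mp h1
  set S : Subgroup (FreeGroup G) := ((⊤ : Subgroup G).lowerCentralSeries n).comap π with hSdef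
  haveI hSn : S.Normal := Subgroup.Normal.comap inferInstance π
  have hP2 : ∀ w ∈ S', h w ∈ S := by
    intro w hw
    have hw' : π' w ∈ (⊤ : Subgroup H).lowerCentralSeries n := hw
    have h1 := hP1 w
    have h2 : φ (π (h w)) ∈ (⊤ : Subgroup H).lowerCentralSeries n := by
      have e : φ (π (h w)) = π' w * ((φ (π (h w)))⁻¹ * π' w)⁻¹ := by group
      rw [e]
      exact mul_mem hw' (inv_mem h1)
    exact Subgroup.mem_comap.mpr (hinj _ h2)
  set k : FreeGroup G →* FreeGroup G := h.comp f with hkdef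
  have hk : ∀ w, (k w)⁻¹ * w ∈ S := by
    intro w
    have h1 := hP1 (f w)
    rw [hcompat w] at h1
    have h2 : φ ((π (k w))⁻¹ * π w) ∈ (⊤ : Subgroup H).lowerCentralSeries n := by
      rw [map_mul, map_inv]
      exact h1
    have h3 := hinj _ h2
    refine Subgroup.mem_comap.mpr ?_
    rwa [map_mul, map_inv]
  have hc₁comm : c₁ ∈ ⁅(⊤ : Subgroup (FreeGroup G)), (⊤ : Subgroup (FreeGroup G))⁆ := by
    have hcin : c ∈ commutator (FreeGroup G) := by
      rw [← Subgroup.top_lowerCentralSeries_one]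
      exact Subgroup.lowerCentralSeries_antitone _ hn hc
    rw [← commutator_def]
    exact mul_mem hcin (inv_mem hxcomm)
  have hkey : (k c₁)⁻¹ * c₁ ∈ ⁅(⊤ : Subgroup (FreeGroup G)), S⁆ := ker_shift k S hk hc₁comm
  have hkc₁ : k c₁ ∈ ⁅(⊤ : Subgroup (FreeGroup G)), S⁆ := by
    have h1 : k c₁ ∈ (⁅(⊤ : Subgroup (FreeGroup H)), S'⁆).map h := ⟨f c₁, hfc₁, rfl⟩
    rw [Subgroup.map_commutator] at h1
    refine Subgroup.commutator_mono le_top ?_ h1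
    intro y hy
    obtain ⟨w, hw, rfl⟩ := hy
    exact hP2 w hw
  have hc₁mem : c₁ ∈ ⁅(⊤ : Subgroup (FreeGroup G)), S⁆ := by
    have e : c₁ = k c₁ * ((k c₁)⁻¹ * c₁) := by group
    rw [e]
    exact mul_mem hkc₁ hkey
  have hSle : S ≤ (⊤ : Subgroup (FreeGroup G)).lowerCentralSeries n ⊔ presentationKernel G := by
    intro w hw
    have h1 : π w ∈ ((⊤ : Subgroup (FreeGroup G)).lowerCentralSeries n).map π := by
      rw [map_lcs π hπ]; exact hw
    obtain ⟨c', hc', hc'w⟩ := h1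
    have e : w = c' * (c'⁻¹ * w) := by group
    rw [e]
    refine mul_mem (Subgroup.mem_sup_left hc') (Subgroup.mem_sup_right ?_)
    show π (c'⁻¹ * w) = 1
    rw [map_mul, map_inv, hc'w]
    group
  have hfinal : c₁ ∈ (⊤ : Subgroup (FreeGroup G)).lowerCentralSeries (n + 1)
      ⊔ ⁅(⊤ : Subgroup (FreeGroup G)), presentationKernel G⁆ := by
    have h1 : ⁅(⊤ : Subgroup (FreeGroup G)), S⁆
        ≤ ⁅(⊤ : Subgroup (FreeGroup G)),
            (⊤ : Subgroup (FreeGroup G)).lowerCentralSeries n ⊔ presentationKernel G⁆ :=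
      Subgroup.commutator_mono le_rfl hSle
    have h2 := commutator_top_sup_le ((⊤ : Subgroup (FreeGroup G)).lowerCentralSeries n)
      (presentationKernel G)
    have h3 : ⁅(⊤ : Subgroup (FreeGroup G)), (⊤ : Subgroup (FreeGroup G)).lowerCentralSeries n⁆
        = (⊤ : Subgroup (FreeGroup G)).lowerCentralSeries (n + 1) := by
      rw [Subgroup.commutator_comm, ← lcs_succ'_s13]
    have h4 := h1.trans h2
    rw [h3] at h4
    exact h4 hc₁mem
  have hgmem : g ∈ ((⊤ : Subgroup (FreeGroup G)).lowerCentralSeries (n + 1)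
      ⊔ ⁅(⊤ : Subgroup (FreeGroup G)), presentationKernel G⁆).map π :=
    ⟨c₁, hfinal, hπc₁⟩
  rw [Subgroup.map_sup, map_lcs π hπ, Subgroup.map_commutator] at hgmem
  have hmapR : (presentationKernel G).map π = ⊥ := by
    rw [Subgroup.map_eq_bot_iff]
    intro w hw
    exact hw
  rw [hmapR, Subgroup.commutator_bot_right, sup_bot_eq] at hgmem
  exact hgmem


end Step

section Main

variable {G H : Type*} [Group G] [Group H]

private lemma stallings_inj (φ : G →* H)
    (hab : Function.Bijective (Abelianization.map φ))
    (hH2 : ∀ y ∈ hopfSubgroup H, ∃ x ∈ hopfSubgroup G,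
      (FreeGroup.map φ x)⁻¹ * y ∈ ⁅(⊤ : Subgroup (FreeGroup H)), presentationKernel H⁆) :
    ∀ (n : ℕ) (g : G), φ g ∈ (⊤ : Subgroup H).lowerCentralSeries n → g ∈ (⊤ : Subgroup G).lowerCentralSeries n := by
  intro n
  induction n with
  | zero => intro g _; exact Subgroup.mem_top g
  | succ n ih =>
    rcases Nat.eq_zero_or_pos n with rfl | hn
    · intro g hg
      have h01 : (0 : ℕ) + 1 = 1 := rfl
      rw [h01, Subgroup.top_lowerCentralSeries_one] at hg ⊢
      have h1 : Abelianization.map φ (Abelianization.of g) = 1 := by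
        rw [Abelianization.map_of]
        exact (QuotientGroup.eq_one_iff _).mpr hg
      have h2 : Abelianization.of g = 1 := by
        apply hab.1
        rw [h1, map_one]
      exact (QuotientGroup.eq_one_iff _).mp h2
    · exact stallings_step φ hH2 n hn ih (stallings_surj φ hab.2 n)

end Main

/-- Stallings' theorem (integral version): if `φ : G →* H` induces an isomorphism on
abelianizations and a surjection `H₂(G; ℤ) → H₂(H; ℤ)` on second group homology
(`H₂` given by Hopf's formula `(R ⊓ [F,F]) / [F,R]`; the induced map on `H₂` sends the
class of `x` to the class of `FreeGroup.map φ x`, and its surjectivity is stated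
elementwise), then for each finite `k`, `φ` induces an isomorphism `G/G^k ≅ H/H^k`,
where paper's `G^k` is Mathlib's `(⊤ : Subgroup G).lowerCentralSeries (k-1)`. -/
theorem stallings {G H : Type*} [Group G] [Group H] (φ : G →* H)
    (hab : Function.Bijective (Abelianization.map φ))
    (hH2 : ∀ y ∈ hopfSubgroup H, ∃ x ∈ hopfSubgroup G,
      (FreeGroup.map φ x)⁻¹ * y ∈ ⁅(⊤ : Subgroup (FreeGroup H)), presentationKernel H⁆) :
    ∀ k : ℕ, 1 ≤ k → Function.Bijective
      (QuotientGroup.map ((⊤ : Subgroup G).lowerCentralSeries (k - 1)) ((⊤ : Subgroup H).lowerCentralSeries (k - 1)) φ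
        (Subgroup.map_le_iff_le_comap.mp (Subgroup.lowerCentralSeries.map φ (k - 1)))) := by
  intro K hK
  obtain ⟨n, rfl⟩ : ∃ n, K = n + 1 := ⟨K - 1, (Nat.succ_pred_eq_of_pos hK).symm⟩
  have hinj := stallings_inj φ hab hH2 n
  have hsurj := stallings_surj φ hab.2 n
  constructor
  · rw [injective_iff_map_eq_one]
    intro q hq
    obtain ⟨z, rfl⟩ := QuotientGroup.mk_surjective q
    rw [QuotientGroup.map_mk, QuotientGroup.eq_one_iff] at hq
    rw [QuotientGroup.eq_one_iff]
    exact hinj z hq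
  · intro q
    obtain ⟨z, rfl⟩ := QuotientGroup.mk_surjective q
    obtain ⟨g, hg⟩ := hsurj z
    refine ⟨QuotientGroup.mk g, ?_⟩
    rw [QuotientGroup.map_mk]
    exact QuotientGroup.eq.mpr hg
end

section
/- Let μ be the Magnus expansion of the free group F on x_1, ..., x_N. For an iterated commutator c of weight l using each of the distinct generators x_{i_1}, ..., x_{i_l} exactly once, the degree-l part of μ(c) is a nonzero ℤ-linear combination of monomials in X_{i_1}, ..., X_{i_l}. -/
set_option linter.unusedSectionVars false

noncomputable section

open scoped commutatorElement

/-- `IterComm L c` : `c` is an iterated commutator built by repeated commutator brackets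
from the generators listed in `L`, each used exactly once (weight = `L.length`). -/
inductive IterComm {N : ℕ} : List (Fin N) → FreeGroup (Fin N) → Prop
  | of (i : Fin N) : IterComm [i] (FreeGroup.of i)
  | comm {L₁ L₂ : List (Fin N)} {c₁ c₂ : FreeGroup (Fin N)} :
      IterComm L₁ c₁ → IterComm L₂ c₂ → IterComm (L₁ ++ L₂) ⁅c₁, c₂⁆

namespace MagnusAux

open NCSeries

variable {σ : Type} [DecidableEq σ]

theorem sub_def (f g : NCSeries σ) (w : List σ) : (f - g) w = f w - g w := rfl

theorem mul_apply_nil (f g : NCSeries σ) : (f * g) [] = f [] * g [] := by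
  simp [NCSeries.mul_def]

theorem supp_mul {S : Set σ} {f g : NCSeries σ}
    (hf : ∀ w, f w ≠ 0 → ∀ x ∈ w, x ∈ S) (hg : ∀ w, g w ≠ 0 → ∀ x ∈ w, x ∈ S) :
    ∀ w, (f * g) w ≠ 0 → ∀ x ∈ w, x ∈ S := by
  intro w hw x hx
  rw [NCSeries.mul_def] at hw
  obtain ⟨i, -, hi⟩ := Finset.exists_ne_zero_of_sum_ne_zero hw
  have hfi : f (w.take i) ≠ 0 := fun h => hi (by simp [h])
  have hgi : g (w.drop i) ≠ 0 := fun h => hi (by simp [h])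
  have hx' : x ∈ w.take i ++ w.drop i := by rw [List.take_append_drop]; exact hx
  rcases List.mem_append.1 hx' with h | h
  · exact hf _ hfi x h
  · exact hg _ hgi x h

theorem inv_apply (U : (NCSeries σ)ˣ) (hU : (U : NCSeries σ) [] = 1) (w : List σ)
    (hw : w ≠ []) :
    (↑U⁻¹ : NCSeries σ) w =
      -∑ i ∈ Finset.range w.length,
        (↑U⁻¹ : NCSeries σ) (w.take i) * (↑U : NCSeries σ) (w.drop i) := by
  have h : ((↑U⁻¹ : NCSeries σ) * ↑U) w = 0 := by
    rw [Units.inv_mul, NCSeries.one_def, if_neg hw]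
  rw [NCSeries.mul_def, Finset.sum_range_succ, List.take_length, List.drop_length, hU,
    mul_one] at h
  linarith

theorem eps_inv (U : (NCSeries σ)ˣ) (hU : (U : NCSeries σ) [] = 1) :
    (↑U⁻¹ : NCSeries σ) [] = 1 := by
  have h : ((↑U : NCSeries σ) * ↑U⁻¹) [] = (1 : NCSeries σ) [] := by rw [Units.mul_inv]
  rw [mul_apply_nil, hU, one_mul, NCSeries.one_def, if_pos rfl] at h
  exact h

theorem supp_inv {S : Set σ} (U : (NCSeries σ)ˣ) (hU : (U : NCSeries σ) [] = 1)
    (hf : ∀ w, (↑U : NCSeries σ) w ≠ 0 → ∀ x ∈ w, x ∈ S) :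
    ∀ w, (↑U⁻¹ : NCSeries σ) w ≠ 0 → ∀ x ∈ w, x ∈ S := by
  suffices H : ∀ n (w : List σ), w.length ≤ n →
      (↑U⁻¹ : NCSeries σ) w ≠ 0 → ∀ x ∈ w, x ∈ S by
    intro w; exact H w.length w le_rfl
  intro n
  induction n with
  | zero =>
    intro w hw h x hx
    rw [List.length_eq_zero_iff.1 (Nat.le_zero.1 hw)] at hx
    simp at hx
  | succ n ih =>
    intro w hw h x hx
    rcases eq_or_ne w [] with rfl | hne
    · simp at hx
    rw [inv_apply U hU w hne] at h
    have h' : ∑ i ∈ Finset.range w.length,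
        (↑U⁻¹ : NCSeries σ) (w.take i) * (↑U : NCSeries σ) (w.drop i) ≠ 0 := by
      intro h0; rw [h0] at h; simp at h
    obtain ⟨i, hi, hine⟩ := Finset.exists_ne_zero_of_sum_ne_zero h'
    simp only [Finset.mem_range] at hi
    have h1 : (↑U⁻¹ : NCSeries σ) (w.take i) ≠ 0 := fun h0 => hine (by simp [h0])
    have h2 : (↑U : NCSeries σ) (w.drop i) ≠ 0 := fun h0 => hine (by simp [h0])
    have hx' : x ∈ w.take i ++ w.drop i := by rw [List.take_append_drop]; exact hx
    rcases List.mem_append.1 hx' with hx1 | hx2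
    · exact ih (w.take i) (by rw [List.length_take]; omega) h1 x hx1
    · exact hf _ h2 x hx2

theorem mul_apply_low {f g : NCSeries σ} {l₁ l₂ : ℕ} (hf0 : f [] = 1) (hg0 : g [] = 1)
    (hf : ∀ w : List σ, w ≠ [] → w.length < l₁ → f w = 0)
    (hg : ∀ w : List σ, w ≠ [] → w.length < l₂ → g w = 0)
    (w : List σ) (hne : w ≠ []) (hw : w.length < l₁ + l₂) :
    (f * g) w = f w + g w := by
  have hn : 0 < w.length := List.length_pos_iff.2 hne
  rw [NCSeries.mul_def, Finset.sum_range_succ, List.take_length, List.drop_length, hg0,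
    mul_one]
  have hsum : ∑ i ∈ Finset.range w.length, f (w.take i) * g (w.drop i) = g w := by
    rw [Finset.sum_eq_single 0]
    · simp [hf0]
    · intro i hi hi0
      simp only [Finset.mem_range] at hi
      have hti : w.take i ≠ [] := by
        simp only [ne_eq, List.take_eq_nil_iff]
        push_neg; exact ⟨hi0, hne⟩
      by_cases hil : i < l₁
      · rw [hf _ hti (by rw [List.length_take]; omega), zero_mul]
      · have hdi : w.drop i ≠ [] := by
          intro h0
          have := congrArg List.length h0
          rw [List.length_drop] at this
          simp at this; omega
        rw [hg _ hdi (by rw [List.length_drop]; omega), mul_zero]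
    · intro habs; exact absurd (Finset.mem_range.2 hn) habs
  rw [hsum]; ring

end MagnusAux

theorem iterComm_ne_nil {N : ℕ} {L : List (Fin N)} {c : FreeGroup (Fin N)}
    (h : IterComm L c) : L ≠ [] := by
  induction h with
  | of i => simp
  | comm h1 h2 ih1 ih2 =>
    intro h0
    exact ih1 (List.append_eq_nil_iff.1 h0).1

theorem magnus_key (N : ℕ) (L : List (Fin N)) (c : FreeGroup (Fin N))
    (h : IterComm L c) :
    L.Nodup →
    (∀ w, ((magnus N c : (NCSeries (Fin N))ˣ) : NCSeries (Fin N)) w ≠ 0 → ∀ x ∈ w, x ∈ L) ∧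
    ((magnus N c : (NCSeries (Fin N))ˣ) : NCSeries (Fin N)) [] = 1 ∧
    (∀ w : List (Fin N), w ≠ [] → w.length < L.length →
      ((magnus N c : (NCSeries (Fin N))ˣ) : NCSeries (Fin N)) w = 0) ∧
    (∃ u : List (Fin N), u.length = L.length ∧
      ((magnus N c : (NCSeries (Fin N))ˣ) : NCSeries (Fin N)) u ≠ 0) := by
  induction h with
  | of i =>
    intro _
    have hmag : magnus N (FreeGroup.of i) = NCSeries.oneAddX i := FreeGroup.lift_apply_of
    have hval : ∀ w : List (Fin N),
        ((magnus N (FreeGroup.of i) : (NCSeries (Fin N))ˣ) : NCSeries (Fin N)) w =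
          (if w = [] then 1 else 0) + (if w = [i] then 1 else 0) := by
      intro w
      rw [hmag]
      show ((1 + NCSeries.X i : NCSeries (Fin N))) w = _
      rw [NCSeries.add_def, NCSeries.one_def]
      rfl
    refine ⟨?_, ?_, ?_, ?_⟩
    · intro w hw x hx
      rw [hval] at hw
      rcases eq_or_ne w [] with rfl | hne
      · simp at hx
      · have : w = [i] := by
          by_contra hne2
          rw [if_neg hne, if_neg hne2] at hw; simp at hw
        rw [this] at hx; simpa using hx
    · rw [hval]; simp
    · intro w hne hlen
      have := List.length_pos_iff.2 hne
      simp only [List.length_singleton] at hlen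
      omega
    · exact ⟨[i], by simp, by rw [hval]; simp⟩
  | @comm L₁ L₂ c₁ c₂ h1 h2 ih1 ih2 =>
    intro hnd
    rw [List.nodup_append] at hnd
    obtain ⟨hnd1, hnd2, hdisj⟩ := hnd
    have hdisj : L₁.Disjoint L₂ := List.disjoint_left.2 fun a ha hb => hdisj a ha a hb rfl
    obtain ⟨hS1, hε1, hV1, u₁, hu1len, hu1v⟩ := ih1 hnd1
    obtain ⟨hS2, hε2, hV2, u₂, hu2len, hu2v⟩ := ih2 hnd2
    set A := magnus N c₁ with hA
    set B := magnus N c₂ with hB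
    set fA : NCSeries (Fin N) := ↑A with hfA
    set fB : NCSeries (Fin N) := ↑B with hfB
    set fA' : NCSeries (Fin N) := ↑A⁻¹ with hfA'
    set fB' : NCSeries (Fin N) := ↑B⁻¹ with hfB'
    set E : NCSeries (Fin N) := fA * fB - fB * fA with hEdef
    have hl1 : 0 < L₁.length := List.length_pos_iff.2 (iterComm_ne_nil h1)
    have hl2 : 0 < L₂.length := List.length_pos_iff.2 (iterComm_ne_nil h2)
    have hu1ne : u₁ ≠ [] := by
      intro h0; rw [h0] at hu1len; simp at hu1len; omega
    have hu2ne : u₂ ≠ [] := by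
      intro h0; rw [h0] at hu2len; simp at hu2len; omega
    have hu1mem : ∀ x ∈ u₁, x ∈ L₁ := hS1 u₁ hu1v
    have hu2mem : ∀ x ∈ u₂, x ∈ L₂ := hS2 u₂ hu2v
    obtain ⟨e₁, t₁, hu1eq⟩ := List.exists_cons_of_ne_nil hu1ne
    obtain ⟨e₂, t₂, hu2eq⟩ := List.exists_cons_of_ne_nil hu2ne
    have he1L1 : e₁ ∈ L₁ := hu1mem e₁ (by rw [hu1eq]; exact List.mem_cons_self)
    have he2L2 : e₂ ∈ L₂ := hu2mem e₂ (by rw [hu2eq]; exact List.mem_cons_self)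
    have hE0 : ∀ w : List (Fin N), w.length < L₁.length + L₂.length → E w = 0 := by
      intro w hw
      rcases eq_or_ne w [] with rfl | hne
      · rw [hEdef, MagnusAux.sub_def, MagnusAux.mul_apply_nil, MagnusAux.mul_apply_nil,
          hε1, hε2]
        ring
      · have e1 := MagnusAux.mul_apply_low hε1 hε2 hV1 hV2 w hne hw
        have e2 := MagnusAux.mul_apply_low hε2 hε1 hV2 hV1 w hne (by omega)
        rw [hEdef, MagnusAux.sub_def, e1, e2]
        ring
    have hM : ((magnus N ⁅c₁, c₂⁆ : (NCSeries (Fin N))ˣ) : NCSeries (Fin N)) =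
        fA * fB * fA' * fB' := by
      rw [map_commutatorElement, commutatorElement_def, Units.val_mul, Units.val_mul,
        Units.val_mul]
    have hAA : fA * fA' = 1 := Units.mul_inv A
    have hBB : fB * fB' = 1 := Units.mul_inv B
    have hkey : fA * fB * fA' * fB' = 1 + E * (fA' * fB') := by
      have hh1 : fB * fA * (fA' * fB') = 1 := by
        rw [mul_assoc fB fA, ← mul_assoc fA fA', hAA, one_mul, hBB]
      have hh2 : fA * fB * (fA' * fB') = fA * fB * fA' * fB' :=
        (mul_assoc (fA * fB) fA' fB').symm
      calc fA * fB * fA' * fB' = 1 + (fA * fB * (fA' * fB') - 1) := by rw [hh2]; abel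
        _ = 1 + (fA * fB * (fA' * fB') - fB * fA * (fA' * fB')) := by rw [hh1]
        _ = 1 + E * (fA' * fB') := by rw [hEdef, sub_mul]
    have hMv : ((magnus N ⁅c₁, c₂⁆ : (NCSeries (Fin N))ˣ) : NCSeries (Fin N)) =
        1 + E * (fA' * fB') := hM.trans hkey
    have hSmix : ∀ x, x ∈ L₁ ++ L₂ ↔ x ∈ ({y | y ∈ L₁ ++ L₂} : Set (Fin N)) :=
      fun x => Iff.rfl
    refine ⟨?_, ?_, ?_, ?_⟩
    · -- support
      rw [hM]
      have sA : ∀ w, fA w ≠ 0 → ∀ x ∈ w, x ∈ ({y | y ∈ L₁ ++ L₂} : Set (Fin N)) :=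
        fun w hw x hx => List.mem_append.2 (Or.inl (hS1 w hw x hx))
      have sB : ∀ w, fB w ≠ 0 → ∀ x ∈ w, x ∈ ({y | y ∈ L₁ ++ L₂} : Set (Fin N)) :=
        fun w hw x hx => List.mem_append.2 (Or.inr (hS2 w hw x hx))
      have sA' := MagnusAux.supp_inv A hε1 sA
      have sB' := MagnusAux.supp_inv B hε2 sB
      exact fun w hw x hx =>
        MagnusAux.supp_mul (MagnusAux.supp_mul (MagnusAux.supp_mul sA sB) sA') sB' w hw x hx
    · -- constant term
      rw [hMv, NCSeries.add_def, MagnusAux.mul_apply_nil, hE0 [] (by simp; omega), zero_mul,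
        add_zero, NCSeries.one_def, if_pos rfl]
    · -- low degree vanishing
      intro w hne hlen
      rw [List.length_append] at hlen
      rw [hMv, NCSeries.add_def, NCSeries.one_def, if_neg hne, NCSeries.mul_def, zero_add]
      apply Finset.sum_eq_zero
      intro i hi
      rw [hE0 (w.take i) (by rw [List.length_take]; omega), zero_mul]
    · -- nonzero coefficient at u₁ ++ u₂
      refine ⟨u₁ ++ u₂, by simp [hu1len, hu2len], ?_⟩
      have hune : u₁ ++ u₂ ≠ [] := by simp [hu1ne]
      have hfB12 : fB (u₁ ++ u₂) = 0 := by
        by_contra h0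
        exact (List.disjoint_left.1 hdisj he1L1)
          (hS2 _ h0 e₁ (List.mem_append.2 (Or.inl (by rw [hu1eq]; exact List.mem_cons_self))))
      have hfA12 : fA (u₁ ++ u₂) = 0 := by
        by_contra h0
        exact (List.disjoint_left.1 hdisj
          (hS1 _ h0 e₂ (List.mem_append.2 (Or.inr (by rw [hu2eq]; exact List.mem_cons_self)))))
          he2L2
      have hBA : (fB * fA) (u₁ ++ u₂) = 0 := by
        rw [NCSeries.mul_def]
        apply Finset.sum_eq_zero
        intro i _
        rcases Nat.eq_zero_or_pos i with rfl | hpos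
        · rw [List.take_zero, List.drop_zero, hfA12, mul_zero]
        · have hmem1 : e₁ ∈ (u₁ ++ u₂).take i := by
            rw [hu1eq, List.cons_append]
            obtain ⟨j, rfl⟩ : ∃ j, i = j + 1 := ⟨i - 1, by omega⟩
            rw [List.take_succ_cons]
            exact List.mem_cons_self
          have hz : fB ((u₁ ++ u₂).take i) = 0 := by
            by_contra h0
            exact (List.disjoint_left.1 hdisj he1L1) (hS2 _ h0 e₁ hmem1)
          rw [hz, zero_mul]
      have hAB : (fA * fB) (u₁ ++ u₂) = fA u₁ * fB u₂ := by
        rw [NCSeries.mul_def, Finset.sum_eq_single u₁.length]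
        · rw [List.take_left, List.drop_left]
        · intro i hi hne'
          simp only [Finset.mem_range, List.length_append] at hi
          rcases lt_or_gt_of_ne hne' with hlt | hgt
          · rcases Nat.eq_zero_or_pos i with rfl | hpos
            · rw [List.take_zero, List.drop_zero, hfB12, mul_zero]
            · have heq : (u₁ ++ u₂).take i = u₁.take i :=
                List.take_append_of_le_length (le_of_lt hlt)
              have htne : u₁.take i ≠ [] := by
                simp only [ne_eq, List.take_eq_nil_iff]
                push_neg
                exact ⟨by omega, hu1ne⟩
              rw [heq, hV1 (u₁.take i) htne (by rw [List.length_take]; omega), zero_mul]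
          · have hmem2 : e₂ ∈ (u₁ ++ u₂).take i := by
              rw [List.take_append]
              refine List.mem_append.2 (Or.inr ?_)
              rw [hu2eq]
              obtain ⟨j, hj⟩ : ∃ j, i - u₁.length = j + 1 := ⟨i - u₁.length - 1, by omega⟩
              rw [hj, List.take_succ_cons]
              exact List.mem_cons_self
            have hz : fA ((u₁ ++ u₂).take i) = 0 := by
              by_contra h0
              exact (List.disjoint_left.1 hdisj (hS1 _ h0 e₂ hmem2)) he2L2
            rw [hz, zero_mul]
        · intro habs
          exact absurd (Finset.mem_range.2 (by rw [List.length_append]; omega)) habs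
      have hEu : E (u₁ ++ u₂) = fA u₁ * fB u₂ := by
        rw [hEdef, MagnusAux.sub_def, hAB, hBA, sub_zero]
      have hval : ((magnus N ⁅c₁, c₂⁆ : (NCSeries (Fin N))ˣ) : NCSeries (Fin N)) (u₁ ++ u₂) =
          fA u₁ * fB u₂ := by
        rw [hMv, NCSeries.add_def, NCSeries.one_def, if_neg hune, zero_add, NCSeries.mul_def,
          Finset.sum_eq_single (u₁ ++ u₂).length]
        · rw [List.take_length, List.drop_length, hEu, MagnusAux.mul_apply_nil, hfA', hfB',
            MagnusAux.eps_inv A hε1, MagnusAux.eps_inv B hε2, one_mul, mul_one]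
        · intro i hi hne'
          simp only [Finset.mem_range, List.length_append] at hi hne'
          have hlen : ((u₁ ++ u₂).take i).length < L₁.length + L₂.length := by
            rw [List.length_take, List.length_append]
            omega
          rw [hE0 _ hlen, zero_mul]
        · intro habs
          simp at habs
      rw [hval]
      exact mul_ne_zero hu1v hu2v

/-- For an iterated commutator `c` of weight `l` using distinct generators each exactly
once, the degree-`l` part of the Magnus expansion `μ(c)` is a nonzero `ℤ`-linear
combination of monomials in those variables: some coefficient at a word of length `l`
is nonzero, and every word of length `l` with nonzero coefficient uses only the listed
generators. -/
theorem magnus_degree_part_of_iterComm (N : ℕ) (L : List (Fin N)) (c : FreeGroup (Fin N))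
    (h : IterComm L c) (hnd : L.Nodup) :
    (∃ u : List (Fin N), u.length = L.length ∧
        ((magnus N c : (NCSeries (Fin N))ˣ) : NCSeries (Fin N)) u ≠ 0) ∧
    (∀ u : List (Fin N), u.length = L.length →
        ((magnus N c : (NCSeries (Fin N))ˣ) : NCSeries (Fin N)) u ≠ 0 →
        ∀ x ∈ u, x ∈ L) := by
  obtain ⟨hS, -, -, hex⟩ := magnus_key N L c h hnd
  exact ⟨hex, fun u _ hu x hx => hS u hu x hx⟩

end
end
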